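/- arXiv:1701.05098 — 2 statements merged into one kernel-verified Lean document; each statement's English description precedes it below -/
import Mathlib

section
/- For every nonzero real number x and every positive integer m, one has (1/(2m-1)) · ( 1/(1+2i/x)^{2m-1} - 1/(1-2i/x)^{2m-1} ) = (2i/(2m-1)) · (x/2)^{2m-1} · Σ_{n=1}^{2m-1} (-1)^n · (x/2)^{2m-1-(2n-1)} / (1+(x/2)²)^{2m-1} · C(2m-1, 2n-1). -/
open Complex Finset

lemma sum_odd_aux (M : ℕ) (g : ℕ → ℂ) (hg : ∀ k, Even k → g k = 0) :
    ∑ k ∈ Finset.range (2 * M), g k = ∑ j ∈ Finset.range M, g (2 * j + 1) := by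
  induction M with
  | zero => simp
  | succ M ih =>
      have : 2 * (M + 1) = (2 * M + 1) + 1 := by ring
      rw [this, Finset.sum_range_succ, Finset.sum_range_succ, ih,
        hg (2 * M) ⟨M, by ring⟩, Finset.sum_range_succ]
      ring

lemma key_lemma (z : ℂ) (m : ℕ) (hm : 0 < m) :
    (z - I) ^ (2 * m - 1) - (z + I) ^ (2 * m - 1)
      = 2 * I * ∑ n ∈ Finset.Icc 1 m,
          (-1 : ℂ) ^ n * z ^ (2 * (m - n)) * ((2 * m - 1).choose (2 * n - 1) : ℂ) := by
  have h1 : (z + I) ^ (2 * m - 1) = ∑ k ∈ Finset.range (2 * m),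
      I ^ k * z ^ (2 * m - 1 - k) * ((2 * m - 1).choose k : ℂ) := by
    rw [add_comm z I, add_pow, show 2 * m = 2 * m - 1 + 1 by omega]
    simp
  have h2 : (z - I) ^ (2 * m - 1) = ∑ k ∈ Finset.range (2 * m),
      (-I) ^ k * z ^ (2 * m - 1 - k) * ((2 * m - 1).choose k : ℂ) := by
    rw [sub_eq_add_neg, add_comm z (-I), add_pow, show 2 * m = 2 * m - 1 + 1 by omega]
    simp
  rw [h1, h2, ← Finset.sum_sub_distrib]
  set g : ℕ → ℂ := fun k => (-I) ^ k * z ^ (2 * m - 1 - k) * ((2 * m - 1).choose k : ℂ)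
      - I ^ k * z ^ (2 * m - 1 - k) * ((2 * m - 1).choose k : ℂ) with hgdef
  have hg : ∀ k, Even k → g k = 0 := by
    intro k ⟨r, hr⟩
    simp only [hgdef, hr]
    rw [show r + r = 2 * r by ring]
    rw [pow_mul, pow_mul]
    simp
  rw [sum_odd_aux m g hg, ← Finset.Ico_add_one_right_eq_Icc, Finset.sum_Ico_eq_sum_range]
  rw [Finset.mul_sum]
  apply Finset.sum_congr (by norm_num)
  intro j hj
  simp only [Finset.mem_range] at hj
  simp only [hgdef]
  have hIe : (I:ℂ) ^ (2*j+1) = (-1)^j * I := by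
    rw [pow_succ, pow_mul, I_sq]
  have hIo : (-I:ℂ) ^ (2*j+1) = -((-1)^j * I) := by
    rw [neg_pow, hIe]; simp [pow_succ]
  have he1 : 2 * m - 1 - (2 * j + 1) = 2 * (m - (1 + j)) := by omega
  have he2 : 2 * (1 + j) - 1 = 2 * j + 1 := by omega
  rw [hIe, hIo, he1, he2, pow_add]
  ring

theorem diff_inv_pow_odd_eq (x : ℝ) (hx : x ≠ 0) (m : ℕ) (hm : 0 < m) :
    (1 / (2 * (m : ℂ) - 1)) *
        (1 / (1 + 2 * I / (x : ℂ)) ^ (2 * m - 1) - 1 / (1 - 2 * I / (x : ℂ)) ^ (2 * m - 1)) =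
      (2 * I / (2 * (m : ℂ) - 1)) * ((x : ℂ) / 2) ^ (2 * m - 1) *
        ∑ n ∈ Finset.Icc 1 (2 * m - 1),
          (-1 : ℂ) ^ n * ((x : ℂ) / 2) ^ ((2 * (m : ℤ) - 1) - (2 * (n : ℤ) - 1))
            / (1 + ((x : ℂ) / 2) ^ 2) ^ (2 * m - 1) * ((2 * m - 1).choose (2 * n - 1) : ℂ) := by
  set z : ℂ := (x : ℂ) / 2 with hzdef
  have hz : z ≠ 0 := by
    simp [hzdef, Complex.ofReal_ne_zero, hx]
  have hzre : z.im = 0 := by simp [hzdef]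
  have hzp : z + I ≠ 0 := by
    intro h
    have := congrArg Complex.im h
    simp [hzre] at this
  have hzm : z - I ≠ 0 := by
    intro h
    have := congrArg Complex.im h
    simp [hzre] at this
  have hx2 : (x : ℂ) = 2 * z := by rw [hzdef]; ring
  have h1 : 1 + 2 * I / (x : ℂ) = (z + I) / z := by
    rw [hx2]
    field_simp
  have h2 : 1 - 2 * I / (x : ℂ) = (z - I) / z := by
    rw [hx2]
    field_simp
  have hc : 2 * (m : ℂ) - 1 ≠ 0 := by
    have h : ((2 * m - 1 : ℕ) : ℂ) = 2 * (m : ℂ) - 1 := by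
      push_cast [Nat.cast_sub (by omega : 1 ≤ 2 * m)]
      ring
    have h2 : ((2 * m - 1 : ℕ) : ℂ) ≠ 0 := Nat.cast_ne_zero.mpr (by omega)
    rwa [h] at h2
  have hq : 1 + z ^ 2 = (z + I) * (z - I) := by
    have : (z + I) * (z - I) = z ^ 2 - I ^ 2 := by ring
    rw [this, I_sq]; ring
  have hq0 : 1 + z ^ 2 ≠ 0 := by rw [hq]; exact mul_ne_zero hzp hzm
  -- Restrict the sum to Icc 1 m
  have hsub : Finset.Icc 1 m ⊆ Finset.Icc 1 (2 * m - 1) := by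
    apply Finset.Icc_subset_Icc_right; omega
  have hsum : ∑ n ∈ Finset.Icc 1 (2 * m - 1),
          (-1 : ℂ) ^ n * z ^ ((2 * (m : ℤ) - 1) - (2 * (n : ℤ) - 1))
            / (1 + z ^ 2) ^ (2 * m - 1) * ((2 * m - 1).choose (2 * n - 1) : ℂ)
      = ∑ n ∈ Finset.Icc 1 m,
          (-1 : ℂ) ^ n * z ^ (2 * (m - n))
            / (1 + z ^ 2) ^ (2 * m - 1) * ((2 * m - 1).choose (2 * n - 1) : ℂ) := by
    rw [← Finset.sum_subset hsub]
    · apply Finset.sum_congr rfl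
      intro n hn
      simp only [Finset.mem_Icc] at hn
      have : (2 * (m : ℤ) - 1) - (2 * (n : ℤ) - 1) = ((2 * (m - n) : ℕ) : ℤ) := by
        push_cast [Nat.cast_sub hn.2]; ring
      rw [this, zpow_natCast]
    · intro n hn hn'
      simp only [Finset.mem_Icc] at hn hn'
      have hlt : m < n := by omega
      have : (2 * m - 1).choose (2 * n - 1) = 0 :=
        Nat.choose_eq_zero_of_lt (by omega)
      simp [this]
  rw [hsum]
  clear_value z
  have hkey := key_lemma z m hm
  have hpow : (1 + z ^ 2) ^ (2 * m - 1) = (z + I) ^ (2 * m - 1) * (z - I) ^ (2 * m - 1) := by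
    rw [hq, mul_pow]
  have hS : ∑ n ∈ Finset.Icc 1 m,
      (-1 : ℂ) ^ n * z ^ (2 * (m - n)) * ((2 * m - 1).choose (2 * n - 1) : ℂ)
      = ((z - I) ^ (2 * m - 1) - (z + I) ^ (2 * m - 1)) / (2 * I) := by
    rw [hkey]; field_simp
  have hmain : ∑ n ∈ Finset.Icc 1 m,
      (-1 : ℂ) ^ n * z ^ (2 * (m - n))
        / (1 + z ^ 2) ^ (2 * m - 1) * ((2 * m - 1).choose (2 * n - 1) : ℂ)
      = (∑ n ∈ Finset.Icc 1 m,
          (-1 : ℂ) ^ n * z ^ (2 * (m - n)) * ((2 * m - 1).choose (2 * n - 1) : ℂ))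
        / (1 + z ^ 2) ^ (2 * m - 1) := by
    rw [Finset.sum_div]
    apply Finset.sum_congr rfl
    intro n _
    ring
  rw [hmain, hS, hpow, h1, h2]
  have hzp' : (z + I) ^ (2 * m - 1) ≠ 0 := pow_ne_zero _ hzp
  have hzm' : (z - I) ^ (2 * m - 1) ≠ 0 := pow_ne_zero _ hzm
  have hzn : z ^ (2 * m - 1) ≠ 0 := pow_ne_zero _ hz
  simp only [div_pow]
  field_simp
end

section
/- For every real number x, arctan(x) = -2 · Σ_{m=1}^{∞} Σ_{n=1}^{2m-1} (-1)^n / ( (2m-1) · (1+x²/4)^{2m-1} ) · (x/2)^{2(2m-n)-1} · C(2m-1, 2n-1), where the inner sum over n is a finite sum and the outer series over m converges. -/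
open Finset Complex

lemma im_I_pow_odd (b : ℕ) : (Complex.I ^ (2*b+1)).im = (-1:ℝ)^b := by
  rw [pow_succ, pow_mul, Complex.I_sq,
    show ((-1:ℂ))^b = (((-1:ℝ)^b : ℝ) : ℂ) by push_cast; ring,
    Complex.mul_I_im, Complex.ofReal_re]

lemma im_I_pow_even (b : ℕ) : (Complex.I ^ (2*b)).im = 0 := by
  rw [pow_mul, Complex.I_sq,
    show ((-1:ℂ))^b = (((-1:ℝ)^b : ℝ) : ℂ) by push_cast; ring,
    Complex.ofReal_im]

lemma key (t : ℝ) (m : ℕ) :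
    ∑ n ∈ Icc 1 (2*(m+1)-1),
      (-1:ℝ)^n * ((2*(m+1)-1).choose (2*n-1) : ℝ) * t^(2*(2*(m+1)-n)-1)
    = -((((t:ℂ)) * ((t:ℂ) + Complex.I)) ^ (2*(m+1)-1)).im := by
  have hN : 2*(m+1)-1 = 2*m+1 := by omega
  set S : ℝ := ∑ a ∈ range (m+1), t^(2*a) * ((2*m+1).choose (2*a) : ℝ) * (-1:ℝ)^(m-a) with hS
  have hR : ((((t:ℂ)) * ((t:ℂ) + Complex.I)) ^ (2*m+1)).im = t^(2*m+1) * S := by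
    have h1 : (((t:ℂ)) * ((t:ℂ) + Complex.I)) ^ (2*m+1)
        = ((t^(2*m+1) : ℝ) : ℂ) * ((t:ℂ) + Complex.I)^(2*m+1) := by
      push_cast; rw [mul_pow]
    rw [h1, Complex.im_ofReal_mul]
    congr 1
    calc (((t:ℂ) + Complex.I)^(2*m+1)).im
        = ∑ k ∈ range (2*m+1+1),
            ((t:ℂ)^k * Complex.I^(2*m+1-k) * ((2*m+1).choose k : ℂ)).im := by
          rw [add_pow, Complex.im_sum]
      _ = ∑ k ∈ range (2*m+1+1),
            t^k * ((2*m+1).choose k : ℝ) * (Complex.I^(2*m+1-k)).im := by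
          refine Finset.sum_congr rfl fun k _ => ?_
          rw [show (t:ℂ)^k * Complex.I^(2*m+1-k) * ((2*m+1).choose k : ℂ)
              = (((t^k * ((2*m+1).choose k : ℝ)) : ℝ) : ℂ) * Complex.I^(2*m+1-k) by
              push_cast; ring,
            Complex.im_ofReal_mul]
      _ = ∑ k ∈ (range (2*m+1+1)).filter (fun k => Even k),
            t^k * ((2*m+1).choose k : ℝ) * (Complex.I^(2*m+1-k)).im := by
          refine (Finset.sum_filter_of_ne ?_).symm
          intro k hk hne
          by_contra hodd
          apply hne
          have hkle : k ≤ 2*m+1 := by simp only [Finset.mem_range] at hk; omega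
          have hko : Odd k := Nat.not_even_iff_odd.mp hodd
          obtain ⟨c, hc⟩ := hko
          rw [show 2*m+1-k = 2*(m-c) by omega, im_I_pow_even]
          ring
      _ = S := by
          refine Finset.sum_bij'
            (i := fun (k : ℕ) (_ : k ∈ (range (2*m+1+1)).filter (fun k => Even k)) => k/2)
            (j := fun (a : ℕ) (_ : a ∈ range (m+1)) => 2*a)
            ?_ ?_ ?_ ?_ ?_
          · intro k hk; simp only [Finset.mem_filter, Finset.mem_range] at hk ⊢
            omega
          · intro a ha; simp only [Finset.mem_filter, Finset.mem_range] at ha ⊢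
            exact ⟨by omega, even_two_mul a⟩
          · intro k hk; simp only [Finset.mem_filter, Finset.mem_range] at hk
            obtain ⟨c, hc⟩ := hk.2; omega
          · intro a ha; omega
          · intro k hk
            simp only [Finset.mem_filter, Finset.mem_range] at hk
            obtain ⟨c, hc⟩ := hk.2
            have hk2 : k = 2*c := by omega
            subst hk2
            rw [show 2*m+1-2*c = 2*(m-c)+1 by omega, im_I_pow_odd,
              Nat.mul_div_cancel_left c (by norm_num : 0 < 2)]
  have hL : ∑ n ∈ Icc 1 (2*(m+1)-1),
      (-1:ℝ)^n * ((2*(m+1)-1).choose (2*n-1) : ℝ) * t^(2*(2*(m+1)-n)-1)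
      = -(t^(2*m+1) * S) := by
    calc ∑ n ∈ Icc 1 (2*(m+1)-1),
          (-1:ℝ)^n * ((2*(m+1)-1).choose (2*n-1) : ℝ) * t^(2*(2*(m+1)-n)-1)
        = ∑ n ∈ Icc 1 (m+1),
          (-1:ℝ)^n * ((2*(m+1)-1).choose (2*n-1) : ℝ) * t^(2*(2*(m+1)-n)-1) := by
          refine (Finset.sum_subset (Finset.Icc_subset_Icc_right (by omega)) ?_).symm
          intro n hn hns
          simp only [Finset.mem_Icc] at hn hns
          have h2 : 2*(m+1)-1 < 2*n-1 := by omega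
          rw [Nat.choose_eq_zero_of_lt h2]
          push_cast; ring
      _ = ∑ a ∈ range (m+1), -(t^(2*m+1) * (t^(2*a) * ((2*m+1).choose (2*a) : ℝ) * (-1:ℝ)^(m-a))) := by
          refine Finset.sum_bij'
            (i := fun (n : ℕ) (_ : n ∈ Icc 1 (m+1)) => m+1-n)
            (j := fun (a : ℕ) (_ : a ∈ range (m+1)) => m+1-a)
            ?_ ?_ ?_ ?_ ?_
          · intro n hn; simp only [Finset.mem_Icc, Finset.mem_range] at hn ⊢; omega
          · intro a ha; simp only [Finset.mem_Icc, Finset.mem_range] at ha ⊢; omega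
          · intro n hn; simp only [Finset.mem_Icc] at hn; omega
          · intro a ha; simp only [Finset.mem_range] at ha; omega
          · intro n hn
            simp only [Finset.mem_Icc] at hn
            obtain ⟨hn1, hn2⟩ := hn
            obtain ⟨p, rfl⟩ : ∃ p, n = p+1 := ⟨n-1, by omega⟩
            have hp : p ≤ m := by omega
            have hcs : (2*m+1).choose (2*(p+1)-1) = (2*m+1).choose (2*(m-p)) := by
              have h := Nat.choose_symm (n := 2*m+1) (k := 2*(p+1)-1) (by omega)
              rw [show 2*m+1-(2*(p+1)-1) = 2*(m-p) by omega] at h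
              exact h.symm
            rw [show 2*(m+1)-1 = 2*m+1 from hN, hcs,
              show 2*(2*(m+1)-(p+1))-1 = (2*m+1)+2*(m-p) by omega,
              show m+1-(p+1) = m-p by omega,
              show m-(m-p) = p by omega,
              pow_add, pow_succ]
            ring
      _ = -(t^(2*m+1) * S) := by
          rw [hS, Finset.mul_sum, ← Finset.sum_neg_distrib]
  rw [hL, hN, hR]

theorem arctan_eq_neg_two_tsum (x : ℝ) :
    (Summable fun m : ℕ =>
      ∑ n ∈ Finset.Icc 1 (2 * (m + 1) - 1),
        (-1 : ℝ) ^ n / ((2 * ((m : ℝ) + 1) - 1) * (1 + x ^ 2 / 4) ^ (2 * (m + 1) - 1))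
          * (x / 2) ^ (2 * (2 * (m + 1) - n) - 1)
          * ((2 * (m + 1) - 1).choose (2 * n - 1) : ℝ)) ∧
    Real.arctan x =
      -2 * ∑' m : ℕ,
        ∑ n ∈ Finset.Icc 1 (2 * (m + 1) - 1),
          (-1 : ℝ) ^ n / ((2 * ((m : ℝ) + 1) - 1) * (1 + x ^ 2 / 4) ^ (2 * (m + 1) - 1))
            * (x / 2) ^ (2 * (2 * (m + 1) - n) - 1)
            * ((2 * (m + 1) - 1).choose (2 * n - 1) : ℝ) := by
  obtain ⟨t, ht⟩ : ∃ t : ℝ, t = x / 2 := ⟨x/2, rfl⟩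
  obtain ⟨z, hz⟩ : ∃ z : ℂ, z = (↑t * (↑t + Complex.I)) / ((1 + t^2 : ℝ) : ℂ) :=
    ⟨_, rfl⟩
  have hden : (0:ℝ) < 1 + t^2 := by positivity
  have hdenC : (((1 + t^2 : ℝ)) : ℂ) ≠ 0 := by
    exact_mod_cast hden.ne'
  have hb : 1 + x^2/4 = 1 + t^2 := by rw [ht]; ring
  have hxt : (x:ℂ) = 2*(t:ℂ) := by rw [ht]; push_cast; ring
  -- norm bound
  have hsq : Complex.normSq z = t^2/(1+t^2) := by
    rw [hz, map_div₀, map_mul]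
    simp only [Complex.normSq_ofReal]
    rw [show Complex.normSq ((t:ℂ) + Complex.I) = t^2+1 by
      simp [Complex.normSq_apply]; ring]
    field_simp
    ring
  have hnorm : ‖z‖ < 1 := by
    have h2 : ‖z‖^2 < 1 := by
      rw [Complex.sq_norm, hsq, div_lt_one hden]
      linarith [sq_nonneg t]
    nlinarith [norm_nonneg z]
  -- series
  have harc := Complex.hasSum_arctan (z := -(Complex.I*z))
    (by rwa [norm_neg, norm_mul, Complex.norm_I, one_mul])
  have h3 : HasSum (fun n : ℕ => z^(2*n+1)/((2*n+1:ℕ):ℂ))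
      (Complex.I * Complex.arctan (-(Complex.I*z))) := by
    have h := harc.mul_left Complex.I
    refine h.congr_fun ?_
    intro n
    have hodd : Odd (2*n+1) := ⟨n, by ring⟩
    rw [hodd.neg_pow, mul_pow, pow_succ Complex.I, pow_mul, Complex.I_sq]
    have hone : ((-1:ℂ))^n * (-1)^n = 1 := by
      rw [← pow_add, ← two_mul, pow_mul]; norm_num
    rw [← mul_div_assoc]
    congr 1
    linear_combination (Complex.I^2 * z^(2*n+1)) * hone + z^(2*n+1) * Complex.I_sq
  -- identify the value
  have h1z : (1:ℂ) - z ≠ 0 := by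
    intro h
    rw [sub_eq_zero] at h
    rw [← h] at hnorm
    simp at hnorm
  have hd2 : (1:ℂ) + (t:ℂ)^2 ≠ 0 := by
    intro h
    apply hdenC
    rw [Complex.ofReal_add, Complex.ofReal_one, Complex.ofReal_pow] at *
    exact h
  have hq : (1:ℂ) + z = (1 + (x:ℂ)*Complex.I) * (1 - z) := by
    rw [hz, hxt]
    push_cast
    field_simp
    linear_combination (2*(t:ℂ)^2) * Complex.I_sq
  have hratio : ((1:ℂ) + z)/(1 - z) = 1 + (x:ℂ)*Complex.I := by
    rw [hq, mul_div_assoc, div_self h1z, mul_one]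
  have hlog : Complex.arctan (-(Complex.I*z))
      = -Complex.I/2 * Complex.log (1 + (x:ℂ)*Complex.I) := by
    rw [Complex.arctan]
    have e1 : (1 + (-(Complex.I*z))*Complex.I) = 1 + z := by
      linear_combination (-z) * Complex.I_sq
    have e2 : (1 - (-(Complex.I*z))*Complex.I) = 1 - z := by
      linear_combination z * Complex.I_sq
    rw [e1, e2, hratio]
  have him : (Complex.I * Complex.arctan (-(Complex.I*z))).im = Real.arctan x / 2 := by
    rw [hlog]
    rw [show Complex.I * (-Complex.I/2 * Complex.log (1 + (x:ℂ)*Complex.I))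
        = (((1:ℝ)/2 : ℝ):ℂ) * Complex.log (1 + (x:ℂ)*Complex.I) by
      push_cast
      linear_combination (-(Complex.log (1 + (x:ℂ)*Complex.I))/2) * Complex.I_sq]
    rw [Complex.im_ofReal_mul, Complex.log_im]
    have harg : (1 + (x:ℂ)*Complex.I).arg = Real.arctan x := by
      rw [Complex.arg_of_re_nonneg (by simp), Real.arctan_eq_arcsin]
      have him2 : ((1:ℂ) + (x:ℂ)*Complex.I).im = x := by simp
      have habs : ‖(1 + (x:ℂ)*Complex.I)‖ = Real.sqrt (1+x^2) := by
        rw [Complex.norm_def, Complex.normSq_apply]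
        simp
        ring_nf
      rw [him2, habs]
    rw [harg]
    ring
  -- per-term identification
  have hF : ∀ m : ℕ,
      (∑ n ∈ Finset.Icc 1 (2*(m+1)-1),
        (-1:ℝ)^n / ((2*((m:ℝ)+1)-1) * (1+x^2/4)^(2*(m+1)-1))
          * (x/2)^(2*(2*(m+1)-n)-1) * ((2*(m+1)-1).choose (2*n-1):ℝ))
      = -((z^(2*m+1)/((2*m+1:ℕ):ℂ)).im) := by
    intro m
    have hN2 : 2*(m+1)-1 = 2*m+1 := by omega
    have hNc : ((2*m+1 : ℕ):ℝ) = 2*((m:ℝ)+1)-1 := by push_cast; ring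
    have hstep : ∀ n, (-1:ℝ)^n / ((2*((m:ℝ)+1)-1) * (1+x^2/4)^(2*(m+1)-1))
          * (x/2)^(2*(2*(m+1)-n)-1) * ((2*(m+1)-1).choose (2*n-1):ℝ)
        = ((-1:ℝ)^n * ((2*(m+1)-1).choose (2*n-1):ℝ) * t^(2*(2*(m+1)-n)-1))
            / ((2*((m:ℝ)+1)-1) * (1+t^2)^(2*(m+1)-1)) := by
      intro n
      rw [hb, ← ht]
      ring
    rw [Finset.sum_congr rfl (fun n _ => hstep n), ← Finset.sum_div, key t m, hN2]
    rw [show ((2*m+1:ℕ):ℂ) = (((2*m+1:ℕ):ℝ):ℂ) by push_cast; ring,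
      hz, div_pow, ← Complex.ofReal_pow, Complex.div_ofReal_im, Complex.div_ofReal_im, hNc]
    have hp1 : ((1:ℝ)+t^2)^(2*m+1) ≠ 0 := by positivity
    have hp2 : (2*((m:ℝ)+1)-1) ≠ 0 := by
      have := Nat.cast_nonneg (α := ℝ) m
      intro h; nlinarith
    field_simp
  -- assemble
  have h5 := (Complex.hasSum_im h3).neg
  rw [him] at h5
  have h6 : HasSum (fun m : ℕ =>
      ∑ n ∈ Finset.Icc 1 (2*(m+1)-1),
        (-1:ℝ)^n / ((2*((m:ℝ)+1)-1) * (1+x^2/4)^(2*(m+1)-1))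
          * (x/2)^(2*(2*(m+1)-n)-1) * ((2*(m+1)-1).choose (2*n-1):ℝ))
      (-(Real.arctan x / 2)) := by
    refine h5.congr_fun fun m => ?_
    exact hF m
  exact ⟨h6.summable, by rw [h6.tsum_eq]; ring⟩
end
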